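/- Let m be an even natural number that is not divisible by 4 (equivalently, m/2 is odd). Then for every element A of SL(2, ℤ/3), A^m = -1 if and only if A² = -1. -/
import Mathlib

instance : DecidableEq (Matrix.SpecialLinearGroup (Fin 2) (ZMod 3)) :=
  fun A B => decidable_of_iff (A.1 = B.1) Subtype.ext_iff.symm

instance : Fintype (Matrix.SpecialLinearGroup (Fin 2) (ZMod 3)) :=
  inferInstanceAs (Fintype {A : Matrix (Fin 2) (Fin 2) (ZMod 3) // A.det = 1})

lemma key_stmt_14 : ∀ A : Matrix.SpecialLinearGroup (Fin 2) (ZMod 3),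
    A ^ 12 = 1 ∧ (A ^ 6 = -1 ↔ A ^ 2 = -1) ∧ (A ^ 10 = -1 ↔ A ^ 2 = -1) := by decide

theorem stmt_14 (m : ℕ) (heven : Even m) (h4 : ¬ (4 ∣ m))
    (A : Matrix.SpecialLinearGroup (Fin 2) (ZMod 3)) :
    A ^ m = -1 ↔ A ^ 2 = -1 := by
  obtain ⟨h12, h6, h10⟩ := key_stmt_14 A
  obtain ⟨k, hk⟩ := heven
  have hmod : A ^ m = A ^ (m % 12) := by
    conv_lhs => rw [← Nat.div_add_mod m 12]
    rw [pow_add, pow_mul, h12, one_pow, one_mul]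
  have hr : m % 12 = 2 ∨ m % 12 = 6 ∨ m % 12 = 10 := by omega
  rcases hr with h | h | h <;> rw [hmod, h]
  · exact h6
  · exact h10
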